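/- Let t be a rooted tree with pairwise distinct leaf labels, S a set of labels, and u a vertex of t such that S ⊆ L(u) and for every child w of u either L(w) ∩ S = ∅ or L(w) ⊆ S. Then for every vertex v in the subtree rooted at u, counter_S(v) = |S ∩ L(v)|; in particular counter_S(u) = |S|. -/

import Mathlib

inductive RTree (α : Type*) where
  | leaf (a : α)
  | node (children : List (RTree α))

namespace RTree

variable {α : Type*} [DecidableEq α]

/-- The list of leaf labels of a tree. -/
def leafList : RTree α → List α
  | leaf a => [a]
  | node cs => (cs.attach.map fun ⟨w, _⟩ => leafList w).flatten
decreasing_by have := List.sizeOf_lt_of_mem ‹_›; simp only [node.sizeOf_spec]; omega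

/-- `L v` is the finite set of labels of leaves in the subtree rooted at `v`. -/
def L (v : RTree α) : Finset α := (leafList v).toFinset

/-- The counter function. -/
def counter (S : Finset α) : RTree α → ℕ
  | leaf a => if a ∈ S then 1 else 0
  | node cs =>
      (cs.attach.map fun ⟨w, _⟩ =>
        if counter S w = (L w).card then counter S w else 0).sum
decreasing_by have := List.sizeOf_lt_of_mem ‹_›; simp only [node.sizeOf_spec]; omega

/-- `IsVertex v t` means that `v` is a vertex (subtree) of `t`. -/
inductive IsVertex : RTree α → RTree α → Prop
  | refl (t : RTree α) : IsVertex t t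
  | child {v w : RTree α} {cs : List (RTree α)} : w ∈ cs → IsVertex v w → IsVertex v (node cs)

/-- The list of all vertices (subtrees) of a tree. -/
def vertexList : RTree α → List (RTree α)
  | leaf a => [leaf a]
  | node cs => node cs :: (cs.attach.map fun ⟨w, _⟩ => vertexList w).flatten
decreasing_by have := List.sizeOf_lt_of_mem ‹_›; simp only [node.sizeOf_spec]; omega


omit [DecidableEq α] in
lemma attach_map_eq {β : Type*} (cs : List (RTree α)) (f : RTree α → β) :
    (cs.attach.map fun ⟨w, _⟩ => f w) = cs.map f := by
  have : (fun (x : {x // x ∈ cs}) => f x.1) = f ∘ Subtype.val := rfl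
  rw [show (fun (⟨w, _⟩ : {x // x ∈ cs}) => f w) = (fun x : {x // x ∈ cs} => f x.1) from rfl,
    this, ← List.map_map, List.attach_map_subtype_val]

omit [DecidableEq α] in
lemma leafList_node (cs : List (RTree α)) :
    leafList (node cs) = (cs.map leafList).flatten := by
  rw [leafList, attach_map_eq]

lemma counter_node (S : Finset α) (cs : List (RTree α)) :
    counter S (node cs) =
      (cs.map fun w => if counter S w = (L w).card then counter S w else 0).sum := by
  rw [counter]
  exact congrArg List.sum
    (attach_map_eq cs fun w => if counter S w = (L w).card then counter S w else 0)

omit [DecidableEq α] in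
lemma leafList_sublist {v t : RTree α} (h : IsVertex v t) : v.leafList.Sublist t.leafList := by
  induction h with
  | refl => exact List.Sublist.refl _
  | child hmem _ ih =>
      refine ih.trans ?_
      rw [leafList_node]
      exact List.sublist_flatten_of_mem (List.mem_map_of_mem (f := leafList) hmem)

lemma mem_L {a : α} {v : RTree α} : a ∈ L v ↔ a ∈ v.leafList := List.mem_toFinset

lemma counter_eq_zero (S : Finset α) :
    ∀ v : RTree α, (∀ a ∈ v.leafList, a ∉ S) → counter S v = 0
  | leaf a, h => by
      have := h a (by simp [leafList])
      simp [counter, this]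
  | node cs, h => by
      rw [counter_node]
      apply List.sum_eq_zero
      intro x hx
      simp only [List.mem_map] at hx
      obtain ⟨w, hw, rfl⟩ := hx
      have hz : counter S w = 0 := counter_eq_zero S w (fun a ha => h a (by
        rw [leafList_node, List.mem_flatten]
        exact ⟨leafList w, List.mem_map_of_mem (f := leafList) hw, ha⟩))
      simp [hz]
termination_by v => sizeOf v
decreasing_by have := List.sizeOf_lt_of_mem hw; simp only [node.sizeOf_spec]; omega

lemma counter_eq_length (S : Finset α) :
    ∀ v : RTree α, v.leafList.Nodup → (∀ a ∈ v.leafList, a ∈ S) →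
      counter S v = v.leafList.length
  | leaf a, _, h => by
      have := h a (by simp [leafList])
      simp [counter, leafList, this]
  | node cs, hnd, h => by
      rw [counter_node, leafList_node, List.length_flatten]
      rw [List.map_map]
      congr 1
      apply List.map_congr_left
      intro w hw
      have hsub : (leafList w).Sublist (leafList (node cs)) := by
        rw [leafList_node]
        exact List.sublist_flatten_of_mem (List.mem_map_of_mem (f := leafList) hw)
      have hnd' : (leafList w).Nodup := hnd.sublist hsub
      have hall : ∀ a ∈ w.leafList, a ∈ S := fun a ha => h a (hsub.mem ha)
      have hc : counter S w = w.leafList.length := counter_eq_length S w hnd' hall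
      have hcard : (L w).card = w.leafList.length := List.toFinset_card_of_nodup hnd'
      simp [hc, hcard]
termination_by v => sizeOf v
decreasing_by have := List.sizeOf_lt_of_mem hw; simp only [node.sizeOf_spec]; omega

lemma card_inter_eq (S : Finset α) {v : RTree α} (hnd : v.leafList.Nodup) :
    (S ∩ L v).card = (v.leafList.filter (· ∈ S)).length := by
  have hset : S ∩ L v = (v.leafList.filter (· ∈ S)).toFinset := by
    ext a
    simp [mem_L, Finset.mem_inter, List.mem_filter, and_comm]
  rw [hset, List.toFinset_card_of_nodup (hnd.filter _)]

/-- if `S ⊆ L(u)` and for every child `w` of `u` either `L(w) ∩ S = ∅` or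
`L(w) ⊆ S`, then for every vertex `v` in the subtree rooted at `u`,
`counter_S(v) = |S ∩ L(v)|`; in particular `counter_S(u) = |S|`. -/
theorem counter_eq_of_compatible (t : RTree α) (hnd : t.leafList.Nodup)
    (S : Finset α) (u : RTree α) (hu : IsVertex u t) (hS : S ⊆ L u)
    (hcompat : ∀ cs : List (RTree α), u = node cs → ∀ w ∈ cs, L w ∩ S = ∅ ∨ L w ⊆ S) :
    (∀ v : RTree α, IsVertex v u → counter S v = (S ∩ L v).card) ∧
      counter S u = S.card := by

  have hndu : u.leafList.Nodup := hnd.sublist (leafList_sublist hu)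
  have key : ∀ v : RTree α, IsVertex v u → counter S v = (S ∩ L v).card := by
    intro v hv
    cases hv with
    | refl =>
        cases u with
        | leaf a =>
            rw [Finset.inter_eq_left.mpr hS]
            have hL : L (leaf a) = {a} := by simp [L, leafList]
            rw [hL] at hS
            by_cases ha : a ∈ S
            · have : S = {a} := Finset.Subset.antisymm hS (Finset.singleton_subset_iff.mpr ha)
              simp [counter, this, ha]
            · have : S = ∅ := by
                ext x
                simp only [Finset.notMem_empty, iff_false]
                intro hx
                have h1 := hS hx
                simp only [Finset.mem_singleton] at h1
                exact ha (h1 ▸ hx)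
              simp [counter, this, ha]
        | node cs =>
            rw [counter_node, card_inter_eq S hndu, leafList_node, List.filter_flatten,
              List.length_flatten, List.map_map, List.map_map]
            congr 1
            apply List.map_congr_left
            intro w hw
            have hsub : (leafList w).Sublist (leafList (node cs)) := by
              rw [leafList_node]
              exact List.sublist_flatten_of_mem (List.mem_map_of_mem (f := leafList) hw)
            have hndw : (leafList w).Nodup := hndu.sublist hsub
            rcases hcompat cs rfl w hw with hdisj | hsubS
            · have hz : counter S w = 0 := counter_eq_zero S w (fun a ha haS => by
                have : a ∈ L w ∩ S := Finset.mem_inter.mpr ⟨mem_L.mpr ha, haS⟩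
                rw [hdisj] at this
                exact absurd this (Finset.notMem_empty a))
              have hf : (leafList w).filter (· ∈ S) = [] := by
                apply List.filter_eq_nil_iff.mpr
                intro a ha
                simp only [decide_eq_true_eq]
                intro haS
                have : a ∈ L w ∩ S := Finset.mem_inter.mpr ⟨mem_L.mpr ha, haS⟩
                rw [hdisj] at this
                exact absurd this (Finset.notMem_empty a)
              simp [hz, hf]
            · have hall : ∀ a ∈ w.leafList, a ∈ S := fun a ha => hsubS (mem_L.mpr ha)
              have hc : counter S w = w.leafList.length := counter_eq_length S w hndw hall
              have hcard : (L w).card = w.leafList.length := List.toFinset_card_of_nodup hndw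
              have hf : (leafList w).filter (· ∈ S) = leafList w :=
                List.filter_eq_self.mpr (fun a ha => by simpa using hall a ha)
              simp [hc, hcard, hf]
    | child hmem hv =>
        rename_i w cs
        have hsubw : (leafList v).Sublist (leafList w) := leafList_sublist hv
        have hsub : (leafList w).Sublist (leafList (node cs)) := by
          rw [leafList_node]
          exact List.sublist_flatten_of_mem (List.mem_map_of_mem (f := leafList) hmem)
        rcases hcompat cs rfl w hmem with hdisj | hsubS
        · have hz : counter S v = 0 := counter_eq_zero S v (fun a ha haS => by
            have : a ∈ L w ∩ S := Finset.mem_inter.mpr ⟨mem_L.mpr (hsubw.mem ha), haS⟩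
            rw [hdisj] at this
            exact absurd this (Finset.notMem_empty a))
          have he : S ∩ L v = ∅ := by
            ext a
            simp only [Finset.mem_inter, Finset.notMem_empty, iff_false, not_and]
            intro haS haL
            have : a ∈ L w ∩ S :=
              Finset.mem_inter.mpr ⟨mem_L.mpr (hsubw.mem (mem_L.mp haL)), haS⟩
            rw [hdisj] at this
            exact absurd this (Finset.notMem_empty a)
          simp [hz, he]
        · have hndv : (leafList v).Nodup := hndu.sublist (hsubw.trans hsub)
          have hall : ∀ a ∈ v.leafList, a ∈ S :=
            fun a ha => hsubS (mem_L.mpr (hsubw.mem ha))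
          rw [counter_eq_length S v hndv hall]
          have hLv : S ∩ L v = L v :=
            Finset.inter_eq_right.mpr (fun a ha => hall a (mem_L.mp ha))
          rw [hLv, L, List.toFinset_card_of_nodup hndv]
  refine ⟨key, ?_⟩
  have := key u (IsVertex.refl u)
  rwa [Finset.inter_eq_left.mpr hS] at this


end RTree
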